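/- arXiv:2203.03512 — 7 statements merged into one kernel-verified Lean document; each statement's English description precedes it below -/
import Mathlib

section
/- For every real F with 0 < F ≤ 1, the map h(p) = p/2 + (1−p)·(p²·F/4 + (1−p²)·F/3) satisfies h(F/3) ≥ F/3 and h(2F/3) ≤ 2F/3, and consequently (h being continuous) there exists a fixed point p* of h with F/3 ≤ p* ≤ 2F/3. -/
/-- The one-generation update map of the bound-violation probability of DE with
saturation correction, `h(p) = p/2 + (1-p)(p²F/4 + (1-p²)F/3)`, for scale factor
`F ∈ (0,1]`, satisfies `h(F/3) ≥ F/3`, `h(2F/3) ≤ 2F/3`, and has a fixed point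
`p*` with `F/3 ≤ p* ≤ 2F/3`. -/
theorem stmt0 (F : ℝ) (hF0 : 0 < F) (hF1 : F ≤ 1) :
    let h : ℝ → ℝ := fun p => p / 2 + (1 - p) * (p ^ 2 * F / 4 + (1 - p ^ 2) * F / 3)
    h (F / 3) ≥ F / 3 ∧ h (2 * F / 3) ≤ 2 * F / 3 ∧
      ∃ p : ℝ, F / 3 ≤ p ∧ p ≤ 2 * F / 3 ∧ h p = p := by
  intro h
  have h1 : h (F / 3) ≥ F / 3 := by
    show F / 3 / 2 + (1 - F / 3) * ((F / 3) ^ 2 * F / 4 + (1 - (F / 3) ^ 2) * F / 3) ≥ F / 3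
    nlinarith [sq_nonneg F, sq_nonneg (1 - F), pow_pos hF0 3, pow_pos hF0 2,
      mul_pos hF0 hF0, sq_nonneg (F * (1 - F))]
  have h2 : h (2 * F / 3) ≤ 2 * F / 3 := by
    show 2 * F / 3 / 2 + (1 - 2 * F / 3) * ((2 * F / 3) ^ 2 * F / 4 + (1 - (2 * F / 3) ^ 2) * F / 3) ≤ 2 * F / 3
    nlinarith [sq_nonneg F, sq_nonneg (1 - F), pow_pos hF0 3, pow_pos hF0 2,
      mul_pos hF0 hF0, sq_nonneg (F * (1 - F))]
  refine ⟨h1, h2, ?_⟩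
  have hle : F / 3 ≤ 2 * F / 3 := by linarith
  have hc : ContinuousOn (fun p => h p - p) (Set.Icc (F / 3) (2 * F / 3)) := by
    apply Continuous.continuousOn
    show Continuous fun p : ℝ => (p / 2 + (1 - p) * (p ^ 2 * F / 4 + (1 - p ^ 2) * F / 3)) - p
    continuity
  have := intermediate_value_Icc' hle hc
  have h0 : (0 : ℝ) ∈ Set.Icc ((fun p => h p - p) (2 * F / 3)) ((fun p => h p - p) (F / 3)) := by
    constructor <;> simp only <;> linarith
  obtain ⟨p, hp, hpe⟩ := this h0
  simp only at hpe
  exact ⟨p, hp.1, hp.2, by linarith⟩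
end

section
/- Let n ≥ 1 and let a, b : Fin n → ℝ with a i < b i for all i, let x, z : Fin n → ℝ. Then ‖c_T(z) − x‖² − ‖c_M(z) − x‖² = Σ_{i : z i < a i ∨ z i > b i} (a i + b i − 2·c_M(z)_i)·(a i + b i − 2·x i). Consequently, if (c_M(z)_i − (a i + b i)/2)·(x i − (a i + b i)/2) ≥ 0 for every index i with z i < a i or z i > b i, then ‖c_M(z) − x‖ ≤ ‖c_T(z) − x‖. -/
/- Norm-comparison step in the proof of Proposition 2:
`‖c_T(z)-x‖² - ‖c_M(z)-x‖² = Σ_{i infeasible} (aᵢ+bᵢ-2c_M(z)ᵢ)(aᵢ+bᵢ-2xᵢ)`, and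
consequently, if `x` and `c_M(z)` lie in the same quadrant on every infeasible
coordinate, then `‖c_M(z)-x‖ ≤ ‖c_T(z)-x‖`. -/
open scoped Classical in
theorem stmt3 (n : ℕ) (hn : 1 ≤ n) (a b x z cM cT : EuclideanSpace ℝ (Fin n))
    (hab : ∀ i, a i < b i)
    (hcM : ∀ i, cM i =
      if z i < a i then 2 * a i - z i else if b i < z i then 2 * b i - z i else z i)
    (hcT : ∀ i, cT i =
      if z i < a i then z i + (b i - a i) else if b i < z i then z i - (b i - a i) else z i) :
    ‖cT - x‖ ^ 2 - ‖cM - x‖ ^ 2 =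
      ∑ i ∈ Finset.univ.filter (fun i => z i < a i ∨ b i < z i),
        (a i + b i - 2 * cM i) * (a i + b i - 2 * x i) ∧
    ((∀ i, (z i < a i ∨ b i < z i) →
        (cM i - (a i + b i) / 2) * (x i - (a i + b i) / 2) ≥ 0) →
      ‖cM - x‖ ≤ ‖cT - x‖) := by
  have hnormT : ‖cT - x‖ ^ 2 = ∑ i, (cT i - x i) ^ 2 := by
    rw [EuclideanSpace.norm_eq, Real.sq_sqrt (by positivity)]
    refine Finset.sum_congr rfl fun i _ => ?_
    simp [sq_abs]
  have hnormM : ‖cM - x‖ ^ 2 = ∑ i, (cM i - x i) ^ 2 := by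
    rw [EuclideanSpace.norm_eq, Real.sq_sqrt (by positivity)]
    refine Finset.sum_congr rfl fun i _ => ?_
    simp [sq_abs]
  have key : ‖cT - x‖ ^ 2 - ‖cM - x‖ ^ 2 =
      ∑ i ∈ Finset.univ.filter (fun i => z i < a i ∨ b i < z i),
        (a i + b i - 2 * cM i) * (a i + b i - 2 * x i) := by
    rw [hnormT, hnormM, ← Finset.sum_sub_distrib,
      ← Finset.sum_filter_add_sum_filter_not Finset.univ (fun i => z i < a i ∨ b i < z i)]
    have h2 : ∑ i ∈ Finset.univ.filter (fun i => ¬(z i < a i ∨ b i < z i)),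
        ((cT i - x i) ^ 2 - (cM i - x i) ^ 2) = 0 := by
      refine Finset.sum_eq_zero fun i hi => ?_
      simp only [Finset.mem_filter] at hi
      push_neg at hi
      rw [hcM i, hcT i, if_neg (not_lt.2 hi.2.1), if_neg (not_lt.2 hi.2.2),
        if_neg (not_lt.2 hi.2.1), if_neg (not_lt.2 hi.2.2)]
      ring
    rw [h2, add_zero]
    refine Finset.sum_congr rfl fun i hi => ?_
    simp only [Finset.mem_filter] at hi
    rcases hi.2 with h | h
    · rw [hcM i, hcT i, if_pos h, if_pos h]; ring
    · have h' : ¬ z i < a i := not_lt.2 (le_of_lt ((hab i).trans h))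
      rw [hcM i, hcT i, if_neg h', if_pos h, if_neg h', if_pos h]; ring
  refine ⟨key, fun hq => ?_⟩
  have hnn : 0 ≤ ‖cT - x‖ ^ 2 - ‖cM - x‖ ^ 2 := by
    rw [key]
    refine Finset.sum_nonneg fun i hi => ?_
    simp only [Finset.mem_filter] at hi
    have := hq i hi.2
    nlinarith [this]
  nlinarith [hnn, norm_nonneg (cM - x), norm_nonneg (cT - x)]
end

section
/- Let n ≥ 1, a, b : Fin n → ℝ with a i < b i, let x be feasible (a i ≤ x i ≤ b i for all i) and let z : Fin n → ℝ have exactly one infeasible component at index k with z k > b k (and a i ≤ z i ≤ b i for all i ≠ k). Let c_S(z) be obtained from z by replacing z k with b k, and let c(z) be obtained from z by replacing z k with some γ satisfying a k < γ < b k. Set d = z − x, d_S = c_S(z) − x, d_C = c(z) − x and assume d_S ≠ 0 and d_C ≠ 0. If ‖d‖² ≥ 2·(z k − x k)·(z k − b k), then ⟨d, d_S⟩/(‖d‖·‖d_S‖) ≥ ⟨d, d_C⟩/(‖d‖·‖d_C‖). -/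
open scoped RealInnerProductSpace

lemma key_aux (A u s t : ℝ) (hA : 0 ≤ A) (hu : 0 < u) (hs : 0 ≤ s) (hsu : s < u)
    (hts : t < s) (hps : 0 < A + s^2) (hpt : 0 < A + t^2)
    (hnorm : A + u^2 ≥ 2*u*(u-s)) :
    (A + u*t) / (Real.sqrt (A+u^2) * Real.sqrt (A+t^2)) ≤
    (A + u*s) / (Real.sqrt (A+u^2) * Real.sqrt (A+s^2)) := by
  have hpu : 0 < A + u^2 := by nlinarith
  have squ : 0 < Real.sqrt (A+u^2) := Real.sqrt_pos.2 hpu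
  have sqs : 0 < Real.sqrt (A+s^2) := Real.sqrt_pos.2 hps
  have sqt : 0 < Real.sqrt (A+t^2) := Real.sqrt_pos.2 hpt
  rw [div_le_div_iff₀ (by positivity) (by positivity)]
  have hkey : (A + u*t) * Real.sqrt (A+s^2) ≤ (A + u*s) * Real.sqrt (A+t^2) := by
    rcases le_or_gt (A + u*t) 0 with h | h
    · have : 0 ≤ (A + u*s) * Real.sqrt (A+t^2) := by positivity
      nlinarith [Real.sqrt_nonneg (A+s^2)]
    · have hAs : 0 < A + u*s := by nlinarith
      have hB : 0 ≤ A*(2*u-s-t) + u*(u*(s+t)-2*s*t) := by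
        nlinarith [mul_nonneg (by nlinarith : (0:ℝ) ≤ A - (u^2 - 2*u*s)) (by nlinarith : (0:ℝ) ≤ 2*u-s-t), sq_nonneg (u-s)]
      have hsq : (A + u*t)^2 * (A+s^2) ≤ (A + u*s)^2 * (A+t^2) := by
        nlinarith [mul_nonneg (mul_nonneg hA (by linarith : (0:ℝ) ≤ s - t)) hB]
      have e1 : (A + u*t) * Real.sqrt (A+s^2) = Real.sqrt ((A + u*t)^2 * (A+s^2)) := by
        rw [Real.sqrt_mul (sq_nonneg _), Real.sqrt_sq h.le]
      have e2 : (A + u*s) * Real.sqrt (A+t^2) = Real.sqrt ((A + u*s)^2 * (A+t^2)) := by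
        rw [Real.sqrt_mul (sq_nonneg _), Real.sqrt_sq hAs.le]
      rw [e1, e2]
      exact Real.sqrt_le_sqrt hsq
  calc (A + u*t) * (Real.sqrt (A+u^2) * Real.sqrt (A+s^2))
      = ((A + u*t) * Real.sqrt (A+s^2)) * Real.sqrt (A+u^2) := by ring
    _ ≤ ((A + u*s) * Real.sqrt (A+t^2)) * Real.sqrt (A+u^2) :=
        mul_le_mul_of_nonneg_right hkey squ.le
    _ = (A + u*s) * (Real.sqrt (A+u^2) * Real.sqrt (A+t^2)) := by ring

/-- Proposition 3: when the trial `z` has exactly one infeasible component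
`z k > b k`, the saturation correction `c_S(z)` (replacing `z k` by `b k`)
preserves the search direction at least as well as any other strategy `c(z)`
replacing `z k` by an interior value `γ ∈ (a k, b k)`, provided
`‖d‖² ≥ 2(z k - x k)(z k - b k)` where `d = z - x`. -/
theorem stmt4 (n : ℕ) (hn : 1 ≤ n) (k : Fin n) (a b x z cS c : EuclideanSpace ℝ (Fin n))
    (γ : ℝ)
    (hab : ∀ i, a i < b i)
    (hx : ∀ i, a i ≤ x i ∧ x i ≤ b i)
    (hzk : b k < z k)
    (hzi : ∀ i, i ≠ k → a i ≤ z i ∧ z i ≤ b i)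
    (hγ : a k < γ ∧ γ < b k)
    (hcS : ∀ i, i ≠ k → cS i = z i) (hcSk : cS k = b k)
    (hc : ∀ i, i ≠ k → c i = z i) (hck : c k = γ)
    (hdS : cS - x ≠ 0) (hdC : c - x ≠ 0)
    (hnorm : ‖z - x‖ ^ 2 ≥ 2 * (z k - x k) * (z k - b k)) :
    ⟪z - x, cS - x⟫ / (‖z - x‖ * ‖cS - x‖) ≥ ⟪z - x, c - x⟫ / (‖z - x‖ * ‖c - x‖) := by
  classical
  set A := ∑ i ∈ Finset.univ.erase k, (z i - x i)^2 with hAdef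
  have hA0 : 0 ≤ A := Finset.sum_nonneg fun i _ => sq_nonneg _
  have hinnS : ⟪z - x, cS - x⟫ = A + (z k - x k) * (b k - x k) := by
    simp only [PiLp.inner_apply, PiLp.sub_apply, RCLike.inner_apply, conj_trivial]
    rw [← Finset.sum_erase_add _ _ (Finset.mem_univ k), hcSk]
    congr 1
    refine Finset.sum_congr rfl fun i hi => ?_
    rw [hcS i (Finset.ne_of_mem_erase hi)]; ring
    ring
  have hinnC : ⟪z - x, c - x⟫ = A + (z k - x k) * (γ - x k) := by
    simp only [PiLp.inner_apply, PiLp.sub_apply, RCLike.inner_apply, conj_trivial]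
    rw [← Finset.sum_erase_add _ _ (Finset.mem_univ k), hck]
    congr 1
    refine Finset.sum_congr rfl fun i hi => ?_
    rw [hc i (Finset.ne_of_mem_erase hi)]; ring
    ring
  have hnd : ‖z - x‖ = Real.sqrt (A + (z k - x k)^2) := by
    rw [EuclideanSpace.norm_eq]
    congr 1
    simp only [PiLp.sub_apply, Real.norm_eq_abs, sq_abs]
    rw [← Finset.sum_erase_add _ _ (Finset.mem_univ k)]
  have hndS : ‖cS - x‖ = Real.sqrt (A + (b k - x k)^2) := by
    rw [EuclideanSpace.norm_eq]
    congr 1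
    simp only [PiLp.sub_apply, Real.norm_eq_abs, sq_abs]
    rw [← Finset.sum_erase_add _ _ (Finset.mem_univ k), hcSk]
    congr 1
    refine Finset.sum_congr rfl fun i hi => ?_
    rw [hcS i (Finset.ne_of_mem_erase hi)]
  have hndC : ‖c - x‖ = Real.sqrt (A + (γ - x k)^2) := by
    rw [EuclideanSpace.norm_eq]
    congr 1
    simp only [PiLp.sub_apply, Real.norm_eq_abs, sq_abs]
    rw [← Finset.sum_erase_add _ _ (Finset.mem_univ k), hck]
    congr 1
    refine Finset.sum_congr rfl fun i hi => ?_
    rw [hc i (Finset.ne_of_mem_erase hi)]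
  have hps : 0 < A + (b k - x k)^2 := by
    have := norm_pos_iff.2 hdS
    rw [hndS] at this
    exact Real.sqrt_pos.1 this
  have hpt : 0 < A + (γ - x k)^2 := by
    have := norm_pos_iff.2 hdC
    rw [hndC] at this
    exact Real.sqrt_pos.1 this
  have hnrm2 : A + (z k - x k)^2 ≥ 2*(z k - x k)*((z k - x k) - (b k - x k)) := by
    rw [hnd] at hnorm
    rw [Real.sq_sqrt (by positivity)] at hnorm
    calc A + (z k - x k)^2 ≥ 2 * (z k - x k) * (z k - b k) := hnorm
      _ = 2*(z k - x k)*((z k - x k) - (b k - x k)) := by ring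
  rw [hinnS, hinnC, hnd, hndS, hndC]
  exact key_aux A (z k - x k) (b k - x k) (γ - x k) hA0
    (by have := (hx k).2; linarith) (by have := (hx k).2; linarith)
    (by linarith) (by linarith [hγ.2]) hps hpt hnrm2
end

section
/- Let D, δ, δ_S, δ_C be real numbers with δ > 0, 0 ≤ δ_C ≤ δ_S < δ, D ≥ δ², D ≥ 2·δ·(δ − δ_S), and D + δ_C² − δ² > 0. Then C(D, δ_S, δ) ≥ C(D, δ_C, δ), where C(D, δ_c, δ) = (D + δ·(δ_c − δ))²/(D + δ_c² − δ²). -/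
/-- The auxiliary inequality from the proof of Proposition 3: with
`C(D, δ_c, δ) = (D + δ(δ_c - δ))² / (D + δ_c² - δ²)`, under the conditions
`δ > 0`, `0 ≤ δ_C ≤ δ_S < δ`, `D ≥ δ²`, `D ≥ 2δ(δ - δ_S)` and
`D + δ_C² - δ² > 0`, one has `C(D, δ_S, δ) ≥ C(D, δ_C, δ)`. -/
theorem stmt5 (D δ δS δC : ℝ)
    (hδ : 0 < δ) (hδC0 : 0 ≤ δC) (hδCS : δC ≤ δS) (hδS : δS < δ)
    (hD1 : D ≥ δ ^ 2) (hD2 : D ≥ 2 * δ * (δ - δS)) (hD3 : D + δC ^ 2 - δ ^ 2 > 0) :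
    (D + δ * (δS - δ)) ^ 2 / (D + δS ^ 2 - δ ^ 2) ≥
      (D + δ * (δC - δ)) ^ 2 / (D + δC ^ 2 - δ ^ 2) := by
  have hS : D + δS ^ 2 - δ ^ 2 > 0 := by nlinarith
  have hA : (0:ℝ) ≤ D - δ ^ 2 := by linarith
  have h1 : (0:ℝ) ≤ δS - δC := by linarith
  have h2 : (0:ℝ) ≤ (D - δ ^ 2) * (2*δ - δS - δC) + δ * (δS * (δ - δC) + δC * (δ - δS)) := by
    have := mul_nonneg hA (by linarith : (0:ℝ) ≤ 2*δ - δS - δC)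
    nlinarith [mul_nonneg (le_of_lt hδ) (mul_nonneg (hδC0.trans hδCS) (by linarith : (0:ℝ) ≤ δ - δC)), mul_nonneg (le_of_lt hδ) (mul_nonneg hδC0 (by linarith : (0:ℝ) ≤ δ - δS))]
  have key := mul_nonneg (mul_nonneg hA h1) h2
  rw [ge_iff_le, div_le_div_iff₀ hD3 hS]
  nlinarith [key]
end

section
/- Let n ≥ 1, a, b : Fin n → ℝ with a i ≤ b i, let x satisfy a i ≤ x i ≤ b i for all i, and let z : Fin n → ℝ be arbitrary. Let c_S(z)_i = max(a i, min(b i, z i)) be the saturation correction. Then (z i − x i)·(c_S(z)_i − x i) ≥ 0 for every i, and hence ⟨z − x, c_S(z) − x⟩ ≥ 0; in particular, if z − x ≠ 0 and c_S(z) − x ≠ 0, the cosine similarity between the search direction z − x and the corrected search direction c_S(z) − x is nonnegative. -/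
open scoped RealInnerProductSpace

/-- Section 4.3: for the saturation correction `c_S(z)ᵢ = max(aᵢ, min(bᵢ, zᵢ))` and a
feasible target `x`, every componentwise product `(zᵢ - xᵢ)(c_S(z)ᵢ - xᵢ)` is
nonnegative, hence `⟨z - x, c_S(z) - x⟩ ≥ 0`, and in particular the cosine
similarity between the uncorrected and the corrected search directions is
nonnegative. -/
theorem stmt6 (n : ℕ) (hn : 1 ≤ n) (a b x z cS : EuclideanSpace ℝ (Fin n))
    (hab : ∀ i, a i ≤ b i)
    (hx : ∀ i, a i ≤ x i ∧ x i ≤ b i)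
    (hcS : ∀ i, cS i = max (a i) (min (b i) (z i))) :
    (∀ i, 0 ≤ (z i - x i) * (cS i - x i)) ∧
    0 ≤ ⟪z - x, cS - x⟫ ∧
    (z - x ≠ 0 → cS - x ≠ 0 →
      0 ≤ ⟪z - x, cS - x⟫ / (‖z - x‖ * ‖cS - x‖)) := by
  have key : ∀ i, 0 ≤ (z i - x i) * (cS i - x i) := by
    intro i
    obtain ⟨hax, hxb⟩ := hx i
    rw [hcS i]
    rcases le_total (z i) (x i) with h | h
    · have h1 : max (a i) (min (b i) (z i)) ≤ x i :=
        max_le hax (le_trans (min_le_right _ _) h)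
      nlinarith
    · have h1 : x i ≤ max (a i) (min (b i) (z i)) :=
        le_max_of_le_right (le_min hxb h)
      nlinarith
  have hinner : 0 ≤ ⟪z - x, cS - x⟫ := by
    rw [PiLp.inner_apply]
    apply Finset.sum_nonneg
    intro i _
    simpa [mul_comm] using key i
  exact ⟨key, hinner, fun _ _ => div_nonneg hinner
    (mul_nonneg (norm_nonneg _) (norm_nonneg _))⟩
end

section
/- Let a, b : Fin n → ℝ with a i ≤ b i, let x₁, x₂, x₃ satisfy a i ≤ (x_j) i ≤ b i for all i and j ∈ {1,2,3}, and let F be a real number. If 0 ≤ F ≤ 1, then for every i the mutant component (x₁) i + F·((x₂) i − (x₃) i) lies in [2·a i − b i, 2·b i − a i]; if moreover 0 ≤ F ≤ 1/2, it lies in [a i − (b i − a i)/2, b i + (b i − a i)/2]. -/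
/-- Section 4 / Proposition 2: if the population members `x₁, x₂, x₃` lie in the
box `⨯ᵢ [aᵢ, bᵢ]` and `0 ≤ F ≤ 1`, then every component of the DE/rand/1 mutant
`x₁ + F(x₂ - x₃)` lies in the extended domain `[2aᵢ - bᵢ, 2bᵢ - aᵢ]`; if moreover
`0 ≤ F ≤ 1/2`, it lies in `[aᵢ - (bᵢ-aᵢ)/2, bᵢ + (bᵢ-aᵢ)/2]`. -/
theorem stmt7 (n : ℕ) (a b x₁ x₂ x₃ : Fin n → ℝ) (F : ℝ)
    (hab : ∀ i, a i ≤ b i)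
    (h1 : ∀ i, a i ≤ x₁ i ∧ x₁ i ≤ b i)
    (h2 : ∀ i, a i ≤ x₂ i ∧ x₂ i ≤ b i)
    (h3 : ∀ i, a i ≤ x₃ i ∧ x₃ i ≤ b i) :
    (0 ≤ F → F ≤ 1 → ∀ i,
      2 * a i - b i ≤ x₁ i + F * (x₂ i - x₃ i) ∧
      x₁ i + F * (x₂ i - x₃ i) ≤ 2 * b i - a i) ∧
    (0 ≤ F → F ≤ 1 / 2 → ∀ i,
      a i - (b i - a i) / 2 ≤ x₁ i + F * (x₂ i - x₃ i) ∧
      x₁ i + F * (x₂ i - x₃ i) ≤ b i + (b i - a i) / 2) := by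
  constructor <;> intro hF0 hF1 i <;>
    obtain ⟨h1l, h1r⟩ := h1 i <;> obtain ⟨h2l, h2r⟩ := h2 i <;>
    obtain ⟨h3l, h3r⟩ := h3 i <;> have := hab i <;> constructor <;>
    nlinarith [mul_le_mul_of_nonneg_left (sub_le_sub h2r h3l) hF0,
      mul_le_mul_of_nonneg_left (sub_le_sub h2l h3r) hF0,
      mul_le_mul_of_nonneg_right hF1 (sub_nonneg.2 (hab i))]
end

section
/- Let 0 < F ≤ 1 and define g : ℝ → ℝ by g(w) = (3/(2F³))·(F − w)²·1_{[0,F]}(w) + (3/(2F³))·(w − (1 − F))²·1_{[1−F,1]}(w). Then ∫_ℝ g(w) dw = 1, ∫_ℝ w·g(w) dw = 1/2, and ∫_ℝ w²·g(w) dw − (1/2)² = F²/10 − F/4 + 1/4. -/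
open MeasureTheory

private lemma hasDerivAt_quartic (a b c d e x : ℝ) :
    HasDerivAt (fun w : ℝ => a * w ^ 1 + b * w ^ 2 + c * w ^ 3 + d * w ^ 4 + e * w ^ 5)
      (a + 2 * b * x + 3 * c * x ^ 2 + 4 * d * x ^ 3 + 5 * e * x ^ 4) x := by
  have h := (((((hasDerivAt_pow 1 x).const_mul a).add
      ((hasDerivAt_pow 2 x).const_mul b)).add
      ((hasDerivAt_pow 3 x).const_mul c)).add
      ((hasDerivAt_pow 4 x).const_mul d)).add
      ((hasDerivAt_pow 5 x).const_mul e)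
  refine h.congr_deriv ?_
  push_cast
  ring

private lemma ind_int (a b : ℝ) (h : a ≤ b) (f P : ℝ → ℝ)
    (hf : Continuous f) (hP : ∀ x, HasDerivAt P (f x) x) :
    (∫ w, Set.indicator (Set.Icc a b) f w) = P b - P a := by
  rw [MeasureTheory.integral_indicator measurableSet_Icc,
    MeasureTheory.integral_Icc_eq_integral_Ioc,
    ← intervalIntegral.integral_of_le h,
    intervalIntegral.integral_eq_sub_of_hasDerivAt (fun x _ => hP x)
      (hf.intervalIntegrable a b)]

private lemma mul_ind (c : ℝ → ℝ) (s : Set ℝ) (f : ℝ → ℝ) :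
    (fun w => c w * s.indicator f w) = s.indicator (fun w => c w * f w) := by
  funext w
  by_cases h : w ∈ s <;> simp [h]

set_option maxHeartbeats 1000000 in
/-- Proposition 4: the density `g` of the mirror-corrected infeasible components
on the unit interval — the equal-weight mixture of the mirrored lower-tail and
upper-tail densities — integrates to `1`, has mean `1/2`, and has variance
`F²/10 - F/4 + 1/4`. -/
theorem stmt12 (F : ℝ) (hF0 : 0 < F) (hF1 : F ≤ 1) :
    let g : ℝ → ℝ := fun w =>
      Set.indicator (Set.Icc (0 : ℝ) F) (fun w => 3 / (2 * F ^ 3) * (F - w) ^ 2) w +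
      Set.indicator (Set.Icc (1 - F) (1 : ℝ)) (fun w => 3 / (2 * F ^ 3) * (w - (1 - F)) ^ 2) w
    (∫ w, g w) = 1 ∧ (∫ w, w * g w) = 1 / 2 ∧
      (∫ w, w ^ 2 * g w) - (1 / 2) ^ 2 = F ^ 2 / 10 - F / 4 + 1 / 4 := by
  intro g
  have hF : (0:ℝ) ≤ F := hF0.le
  have h1F : (1:ℝ) - F ≤ 1 := by linarith
  have hFne : F ≠ 0 := hF0.ne'
  set c : ℝ := 3 / (2 * F ^ 3) with hc
  set s1 : Set ℝ := Set.Icc (0:ℝ) F with hs1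
  set s2 : Set ℝ := Set.Icc (1 - F) (1:ℝ) with hs2
  have hcont1 : Continuous fun w : ℝ => c * (F - w) ^ 2 := by continuity
  have hcont2 : Continuous fun w : ℝ => c * (w - (1 - F)) ^ 2 := by continuity
  -- pointwise description of g and its moments
  have hg : g = fun w => s1.indicator (fun w => c * (F - w) ^ 2) w
      + s2.indicator (fun w => c * (w - (1 - F)) ^ 2) w := rfl
  refine ⟨?_, ?_, ?_⟩
  · have hi1 : Integrable (s1.indicator fun w => c * (F - w) ^ 2) :=
      (hcont1.integrableOn_Icc).integrable_indicator measurableSet_Icc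
    have hi2 : Integrable (s2.indicator fun w => c * (w - (1 - F)) ^ 2) :=
      (hcont2.integrableOn_Icc).integrable_indicator measurableSet_Icc
    rw [hg, integral_add hi1 hi2,
      ind_int 0 F hF _ (fun w => (c * F ^ 2) * w ^ 1 + (-(c * F)) * w ^ 2 + (c / 3) * w ^ 3
        + 0 * w ^ 4 + 0 * w ^ 5) hcont1
        (fun x => by convert hasDerivAt_quartic (c * F ^ 2) (-(c * F)) (c / 3) 0 0 x using 1; ring),
      ind_int (1 - F) 1 h1F _ (fun w => (c * (1 - F) ^ 2) * w ^ 1 + (-(c * (1 - F))) * w ^ 2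
        + (c / 3) * w ^ 3 + 0 * w ^ 4 + 0 * w ^ 5) hcont2
        (fun x => by convert hasDerivAt_quartic (c * (1 - F) ^ 2) (-(c * (1 - F))) (c / 3) 0 0 x using 1; ring)]
    rw [hc]
    field_simp
    ring
  · have hcont1' : Continuous fun w : ℝ => w * (c * (F - w) ^ 2) := by continuity
    have hcont2' : Continuous fun w : ℝ => w * (c * (w - (1 - F)) ^ 2) := by continuity
    have hi1 : Integrable (s1.indicator fun w => w * (c * (F - w) ^ 2)) :=
      (hcont1'.integrableOn_Icc).integrable_indicator measurableSet_Icc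
    have hi2 : Integrable (s2.indicator fun w => w * (c * (w - (1 - F)) ^ 2)) :=
      (hcont2'.integrableOn_Icc).integrable_indicator measurableSet_Icc
    have hrw : (fun w => w * g w) = fun w =>
        s1.indicator (fun w => w * (c * (F - w) ^ 2)) w
        + s2.indicator (fun w => w * (c * (w - (1 - F)) ^ 2)) w := by
      funext w
      rw [hg]
      rw [← mul_ind (fun w => w) s1, ← mul_ind (fun w => w) s2]
      ring
    rw [hrw, integral_add hi1 hi2,
      ind_int 0 F hF _ (fun w => 0 * w ^ 1 + (c * F ^ 2 / 2) * w ^ 2 + (-(2 * c * F / 3)) * w ^ 3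
        + (c / 4) * w ^ 4 + 0 * w ^ 5) hcont1'
        (fun x => by convert hasDerivAt_quartic 0 (c * F ^ 2 / 2) (-(2 * c * F / 3)) (c / 4) 0 x using 1; ring),
      ind_int (1 - F) 1 h1F _ (fun w => 0 * w ^ 1 + (c * (1 - F) ^ 2 / 2) * w ^ 2
        + (-(2 * c * (1 - F) / 3)) * w ^ 3 + (c / 4) * w ^ 4 + 0 * w ^ 5) hcont2'
        (fun x => by convert hasDerivAt_quartic 0 (c * (1 - F) ^ 2 / 2) (-(2 * c * (1 - F) / 3)) (c / 4) 0 x using 1; ring)]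
    rw [hc]
    field_simp
    ring
  · have hcont1' : Continuous fun w : ℝ => w ^ 2 * (c * (F - w) ^ 2) := by continuity
    have hcont2' : Continuous fun w : ℝ => w ^ 2 * (c * (w - (1 - F)) ^ 2) := by continuity
    have hi1 : Integrable (s1.indicator fun w => w ^ 2 * (c * (F - w) ^ 2)) :=
      (hcont1'.integrableOn_Icc).integrable_indicator measurableSet_Icc
    have hi2 : Integrable (s2.indicator fun w => w ^ 2 * (c * (w - (1 - F)) ^ 2)) :=
      (hcont2'.integrableOn_Icc).integrable_indicator measurableSet_Icc
    have hrw : (fun w => w ^ 2 * g w) = fun w =>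
        s1.indicator (fun w => w ^ 2 * (c * (F - w) ^ 2)) w
        + s2.indicator (fun w => w ^ 2 * (c * (w - (1 - F)) ^ 2)) w := by
      funext w
      rw [hg]
      rw [← mul_ind (fun w => w ^ 2) s1, ← mul_ind (fun w => w ^ 2) s2]
      ring
    rw [hrw, integral_add hi1 hi2,
      ind_int 0 F hF _ (fun w => 0 * w ^ 1 + 0 * w ^ 2 + (c * F ^ 2 / 3) * w ^ 3
        + (-(c * F / 2)) * w ^ 4 + (c / 5) * w ^ 5) hcont1'
        (fun x => by convert hasDerivAt_quartic 0 0 (c * F ^ 2 / 3) (-(c * F / 2)) (c / 5) x using 1; ring),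
      ind_int (1 - F) 1 h1F _ (fun w => 0 * w ^ 1 + 0 * w ^ 2 + (c * (1 - F) ^ 2 / 3) * w ^ 3
        + (-(c * (1 - F) / 2)) * w ^ 4 + (c / 5) * w ^ 5) hcont2'
        (fun x => by convert hasDerivAt_quartic 0 0 (c * (1 - F) ^ 2 / 3) (-(c * (1 - F) / 2)) (c / 5) x using 1; ring)]
    rw [hc]
    field_simp
    ring
end
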